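/- Let φ : G → G' be a half-isomorphism of groups. Then A = {a ∈ G : φ(ax) = φ(a)φ(x) for all x ∈ G} is a subgroup of G. -/
import Mathlib

theorem stmt_8 {G G' : Type*} [Group G] [Group G'] (φ : G → G')
    (hbij : Function.Bijective φ)
    (hhalf : ∀ x y : G, φ (x * y) = φ x * φ y ∨ φ (x * y) = φ y * φ x) :
    ∃ A : Subgroup G, (A : Set G) = {a : G | ∀ x : G, φ (a * x) = φ a * φ x} := by
  have hone : φ 1 = 1 := by
    rcases hhalf 1 1 with h | h <;>
    · simp only [one_mul] at h
      exact mul_left_cancel (h.symm.trans (mul_one (φ 1)).symm)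
  have hinv : ∀ a : G, φ a⁻¹ = (φ a)⁻¹ := by
    intro a
    rcases hhalf a a⁻¹ with h | h
    · rw [mul_inv_cancel, hone] at h
      exact eq_inv_of_mul_eq_one_right h.symm
    · rw [mul_inv_cancel, hone] at h
      exact eq_inv_of_mul_eq_one_left h.symm
  refine ⟨{ carrier := {a : G | ∀ x : G, φ (a * x) = φ a * φ x},
            mul_mem' := ?_, one_mem' := ?_, inv_mem' := ?_ }, rfl⟩
  · intro a b ha hb x
    have h1 : φ (a * b * x) = φ a * φ b * φ x := by
      rw [mul_assoc, ha, hb, mul_assoc]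
    rw [h1, ha b]
  · intro x; simp [hone]
  · intro a ha x
    have h1 : φ (a * (a⁻¹ * x)) = φ a * φ (a⁻¹ * x) := ha _
    rw [mul_inv_cancel_left] at h1
    rw [hinv, eq_comm, inv_mul_eq_iff_eq_mul, ← h1]
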